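/- Let μ ≤ λ be infinite cardinals with μ regular. If both λ and λ⁺ are almost μ-closed, then λ^{<μ} = λ when cf(λ) ≥ μ, and λ^{<μ} = λ⁺ when cf(λ) < μ. -/

import Mathlib

open Cardinal

universe u

lemma pow_le_of_lt_cof {l κ : Cardinal.{u}} (hl : ℵ₀ ≤ l) (hκ : κ < l.ord.cof)
    (h : ∀ θ < l, θ ^ κ ≤ l) : l ^ κ ≤ l := by
  haveI : IsWellOrder l.ord.ToType (· < ·) := isWellOrder_lt
  obtain ⟨α, rfl⟩ : ∃ α : Type u, #α = κ := ⟨κ.out, mk_out κ⟩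
  have hβ : #l.ord.ToType = l := by rw [Cardinal.mk_toType, card_ord]
  have hcov : (Set.univ : Set (α → l.ord.ToType)) = ⋃ b : l.ord.ToType, {f : α → l.ord.ToType | ∀ a, f a < b} := by
    ext f
    simp only [Set.mem_univ, Set.mem_iUnion, Set.mem_setOf_eq, true_iff]
    have hrange : #(Set.range f) < Ordinal.cof (Ordinal.type (@LT.lt l.ord.ToType _)) := by
      rw [Ordinal.type_toType]
      exact (mk_range_le).trans_lt hκ
    obtain ⟨b, hb⟩ := not_isCofinal_iff.1 (fun hc => (Order.cof_le hc).not_gt (by rw [Ordinal.cof_type] at hrange; exact hrange))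
    exact ⟨b, fun a => hb (f a) (Set.mem_range_self a)⟩
  have hbound : ∀ b : l.ord.ToType, #{f : α → l.ord.ToType | ∀ a, f a < b} ≤ l := by
    intro b
    have h1 : #{f : α → l.ord.ToType | ∀ a, f a < b} ≤ #(α → {y : l.ord.ToType // y < b}) := by
      refine mk_le_of_injective (f := fun g a => ⟨g.1 a, g.2 a⟩) ?_
      intro g g' hgg'
      ext a
      exact congrArg Subtype.val (congrFun hgg' a)
    have h2 : #(α → {y : l.ord.ToType // y < b}) = #{y : l.ord.ToType // y < b} ^ #α := (power_def _ _).symm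
    have h3 : #{y : l.ord.ToType // y < b} < l := by
      exact Cardinal.card_typein_toType_lt l b
    calc #{f : α → l.ord.ToType | ∀ a, f a < b} ≤ #{y : l.ord.ToType // y < b} ^ #α := h1.trans_eq h2
      _ ≤ l := h _ h3
  calc l ^ #α = #(α → l.ord.ToType) := by
        have := power_def l.ord.ToType α
        rw [hβ] at this
        exact this
    _ = #(Set.univ : Set (α → l.ord.ToType)) := mk_univ.symm
    _ = #(⋃ b : l.ord.ToType, {f : α → l.ord.ToType | ∀ a, f a < b}) := by rw [hcov]
    _ ≤ Cardinal.sum fun b : l.ord.ToType => #{f : α → l.ord.ToType | ∀ a, f a < b} := mk_iUnion_le_sum_mk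
    _ ≤ Cardinal.sum fun _ : l.ord.ToType => l := Cardinal.sum_le_sum _ _ hbound
    _ = #l.ord.ToType * l := sum_const' _ _
    _ = l * l := by rw [hβ]
    _ = l := mul_eq_self hl

/-- A cardinal `ν` is almost `μ`-closed if `θ^{<μ} ≤ ν` for all `θ < ν`. -/
def AlmostMuClosed (μ ν : Cardinal.{u}) : Prop := ∀ θ < ν, θ ^< μ ≤ ν

/-- If `μ ≤ λ` are infinite, `μ` regular, and both `λ` and `λ⁺` are almost `μ`-closed,
then `λ^{<μ} = λ` when `cf(λ) ≥ μ` and `λ^{<μ} = λ⁺` when `cf(λ) < μ`. -/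
theorem stmt5 (μ l : Cardinal.{u}) (hμ : μ.IsRegular) (hl : ℵ₀ ≤ l) (hμl : μ ≤ l)
    (h1 : AlmostMuClosed μ l) (h2 : AlmostMuClosed μ (Order.succ l)) :
    (μ ≤ l.ord.cof → l ^< μ = l) ∧ (l.ord.cof < μ → l ^< μ = Order.succ l) := by
  have h1μ : (1 : Cardinal) < μ := one_lt_aleph0.trans_le hμ.aleph0_le
  constructor
  · intro hcof
    apply le_antisymm
    · rw [powerlt_le]
      intro κ hκ
      exact pow_le_of_lt_cof hl (hκ.trans_le hcof)
        (fun θ hθ => (le_powerlt θ hκ).trans (h1 θ hθ))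
    · have := le_powerlt l h1μ
      rwa [power_one] at this
  · intro hcof
    have hle : l ^< μ ≤ Order.succ l := h2 l (Order.lt_succ l)
    have hlt : l < l ^< μ := (Cardinal.lt_power_cof hl).trans_le (le_powerlt l hcof)
    exact le_antisymm hle (Order.succ_le_of_lt hlt)
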